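/- If f is a (1,2)-sensitive bucketing function on Σⁿ and b is a bucket containing some sequence s, then all sequences assigned to bucket b differ from s only at one single fixed position; in particular, bucket b contains at most |Σ| sequences. -/

import Mathlib

/-- Cost structure for edit distance (removed from Mathlib; restored with its old meaning). -/
structure Levenshtein.Cost (α β δ : Type*) where
  delete : α → δ
  insert : β → δ
  substitute : α → β → δ

/-- The default cost: all operations cost 1, substituting equal letters costs 0. -/
def Levenshtein.defaultCost {α : Type*} [DecidableEq α] : Levenshtein.Cost α α ℕ where
  delete _ := 1
  insert _ := 1
  substitute a b := if a = b then 0 else 1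

/-- Auxiliary step of the dynamic program (as in the old Mathlib). -/
def Levenshtein.impl {α β δ : Type*} [AddZeroClass δ] [Min δ] (C : Levenshtein.Cost α β δ)
    (xs : List α) (y : β) (d : {r : List δ // 0 < r.length}) : {r : List δ // 0 < r.length} :=
  let ⟨ds, w⟩ := d
  xs.zip (ds.zip ds.tail) |>.foldr
    (init := ⟨[C.insert y + ds.getLast (List.ne_nil_of_length_pos w)], by simp⟩)
    (fun ⟨x, d₀, d₁⟩ ⟨r, w⟩ =>
      ⟨min (C.delete x + r[0]) (min (C.insert y + d₀) (C.substitute x y + d₁)) :: r, by simp⟩)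

/-- Edit distances of all suffixes of `xs` against `ys` (as in the old Mathlib). -/
def suffixLevenshtein {α β δ : Type*} [AddZeroClass δ] [Min δ] (C : Levenshtein.Cost α β δ)
    (xs : List α) (ys : List β) : {r : List δ // 0 < r.length} :=
  ys.foldr
    (Levenshtein.impl C xs)
    (xs.foldr (init := ⟨[0], by simp⟩) (fun a ⟨r, w⟩ => ⟨(C.delete a + r[0]) :: r, by simp⟩))

/-- Levenshtein distance with cost `C` (as in the old Mathlib). -/
def levenshtein {α β δ : Type*} [AddZeroClass δ] [Min δ] (C : Levenshtein.Cost α β δ)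
    (xs : List α) (ys : List β) : δ :=
  let ⟨r, w⟩ := suffixLevenshtein C xs ys
  r[0]

/-- Edit (Levenshtein) distance between two length-`n` sequences over `α`. -/
def editDist {α : Type*} [DecidableEq α] {n : ℕ} (s t : Fin n → α) : ℕ :=
  levenshtein Levenshtein.defaultCost (List.ofFn s) (List.ofFn t)

/-- `f` is a `(d₁, d₂)`-sensitive bucketing function. -/
def IsSensitive {α B : Type*} [DecidableEq α] {n : ℕ} (d₁ d₂ : ℕ)
    (f : (Fin n → α) → Set B) : Prop :=
  (∀ s t : Fin n → α, editDist s t ≤ d₁ → (f s ∩ f t).Nonempty) ∧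
  (∀ s t : Fin n → α, d₂ ≤ editDist s t → f s ∩ f t = ∅)

namespace Levenshtein

@[simp] theorem defaultCost_delete {α : Type*} [DecidableEq α] (a : α) :
    (defaultCost : Cost α α ℕ).delete a = 1 := rfl

@[simp] theorem defaultCost_insert {α : Type*} [DecidableEq α] (a : α) :
    (defaultCost : Cost α α ℕ).insert a = 1 := rfl

@[simp] theorem defaultCost_substitute {α : Type*} [DecidableEq α] (a b : α) :
    (defaultCost : Cost α α ℕ).substitute a b = if a = b then 0 else 1 := rfl

theorem impl_length {α β δ : Type*} [AddZeroClass δ] [Min δ] (C : Cost α β δ)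
    (xs : List α) (y : β) (d : {r : List δ // 0 < r.length}) (w : d.1.length = xs.length + 1) :
    (impl C xs y d).1.length = xs.length + 1 := by
  induction xs generalizing d with
  | nil => rfl
  | cons x xs ih =>
    dsimp [impl]
    match d, w with
    | ⟨d₁ :: d₂ :: ds, _⟩, w =>
      dsimp
      congr 1
      exact ih ⟨d₂ :: ds, (by simp)⟩ (by simpa using w)

theorem impl_cons {α β δ : Type*} [AddZeroClass δ] [Min δ] (C : Cost α β δ)
    (x : α) (xs : List α) (y : β) (d : δ) (ds : List δ) (w : 0 < (d :: ds).length)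
    (w' : 0 < List.length ds) :
    impl C (x :: xs) y ⟨d :: ds, w⟩ =
      let ⟨r, w⟩ := impl C xs y ⟨ds, w'⟩
      ⟨min (C.delete x + r[0]) (min (C.insert y + d) (C.substitute x y + ds[0])) :: r, by simp⟩ :=
  match ds, w' with | _ :: _, _ => rfl

end Levenshtein

theorem suffixLevenshtein_length {α β δ : Type*} [AddZeroClass δ] [Min δ]
    (C : Levenshtein.Cost α β δ) (xs : List α) (ys : List β) :
    (suffixLevenshtein C xs ys).1.length = xs.length + 1 := by
  induction ys with
  | nil =>
    dsimp [suffixLevenshtein]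
    induction xs with
    | nil => rfl
    | cons _ xs ih =>
      simp_all
  | cons y ys ih =>
    dsimp [suffixLevenshtein]
    rw [Levenshtein.impl_length]
    exact ih

theorem suffixLevenshtein_cons₂ {α β δ : Type*} [AddZeroClass δ] [Min δ]
    (C : Levenshtein.Cost α β δ) (xs : List α) (y : β) (ys : List β) :
    suffixLevenshtein C xs (y :: ys) = (Levenshtein.impl C xs) y (suffixLevenshtein C xs ys) :=
  rfl

theorem suffixLevenshtein_cons₁_aux {α : Type*} {x y : {r : List α // 0 < r.length}}
    (w₀ : x.1[0]'x.2 = y.1[0]'y.2) (w : x.1.tail = y.1.tail) : x = y := by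
  match x, y with
  | ⟨hx :: tx, _⟩, ⟨hy :: ty, _⟩ => simp_all

theorem suffixLevenshtein_cons₁ {α β δ : Type*} [AddZeroClass δ] [Min δ]
    (C : Levenshtein.Cost α β δ) (x : α) (xs : List α) (ys : List β) :
    suffixLevenshtein C (x :: xs) ys =
      ⟨levenshtein C (x :: xs) ys ::
        (suffixLevenshtein C xs ys).1, by simp⟩ := by
  induction ys with
  | nil => rfl
  | cons y ys ih =>
    apply suffixLevenshtein_cons₁_aux
    · rfl
    · rw [suffixLevenshtein_cons₂ C (x :: xs), ih, Levenshtein.impl_cons]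
      · rfl
      · simp [suffixLevenshtein_length]

theorem impl_cons_head {α β δ : Type*} [AddZeroClass δ] [Min δ]
    (C : Levenshtein.Cost α β δ) (x : α) (xs : List α) (y : β) :
    ∀ (d : {r : List δ // 0 < r.length}) (a : δ) (S : List δ) (_ : d.1 = a :: S)
      (hS : 0 < S.length),
      (Levenshtein.impl C (x :: xs) y d).1[0]'(Levenshtein.impl C (x :: xs) y d).2 =
        min (C.delete x + (Levenshtein.impl C xs y ⟨S, hS⟩).1[0]'(Levenshtein.impl C xs y ⟨S, hS⟩).2)
          (min (C.insert y + a) (C.substitute x y + S[0])) := by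
  rintro ⟨d, w⟩ a S h hS
  simp only at h
  subst h
  match S, hS with
  | _ :: _, _ => rfl

@[simp] theorem levenshtein_nil_cons {α β δ : Type*} [AddZeroClass δ] [Min δ]
    (C : Levenshtein.Cost α β δ) (y : β) (ys : List β) :
    levenshtein C [] (y :: ys) = C.insert y + levenshtein C [] ys := by
  have e : ∀ d : {r : List δ // 0 < r.length}, d.1.length = 1 →
      (Levenshtein.impl C [] y d).1[0]'(Levenshtein.impl C [] y d).2 = C.insert y + d.1[0]'d.2 := by
    rintro ⟨(_ | ⟨a, _ | _⟩), w⟩ h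
    · simp at w
    · rfl
    · simp at h
  exact e _ (suffixLevenshtein_length C [] ys)

@[simp] theorem levenshtein_cons_nil {α β δ : Type*} [AddZeroClass δ] [Min δ]
    (C : Levenshtein.Cost α β δ) (x : α) (xs : List α) :
    levenshtein C (x :: xs) ([] : List β) = C.delete x + levenshtein C xs [] := rfl

@[simp] theorem levenshtein_cons_cons {α β δ : Type*} [AddZeroClass δ] [Min δ]
    (C : Levenshtein.Cost α β δ) (x : α) (xs : List α) (y : β) (ys : List β) :
    levenshtein C (x :: xs) (y :: ys) =
      min (C.delete x + levenshtein C xs (y :: ys))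
        (min (C.insert y + levenshtein C (x :: xs) ys)
          (C.substitute x y + levenshtein C xs ys)) :=
  by
  have e1 : levenshtein C (x :: xs) (y :: ys) =
      (Levenshtein.impl C (x :: xs) y (suffixLevenshtein C (x :: xs) ys)).1[0]'
        (Levenshtein.impl C (x :: xs) y _).2 := rfl
  rw [e1]
  exact impl_cons_head C x xs y _ (levenshtein C (x :: xs) ys) _
    (by rw [suffixLevenshtein_cons₁]) (suffixLevenshtein C xs ys).2

lemma lev_eq_zero {α : Type*} [DecidableEq α] :
    ∀ (l₁ l₂ : List α), levenshtein Levenshtein.defaultCost l₁ l₂ = 0 → l₁ = l₂ := by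
  intro l₁
  induction l₁ with
  | nil =>
    intro l₂ h
    cases l₂ with
    | nil => rfl
    | cons b ys => simp [levenshtein_nil_cons] at h
  | cons a xs ih =>
    intro l₂ h
    cases l₂ with
    | nil => simp [levenshtein_cons_nil] at h
    | cons b ys =>
      by_cases hab : a = b
      · subst hab
        rw [levenshtein_cons_cons] at h
        simp only [Levenshtein.defaultCost_delete, Levenshtein.defaultCost_insert,
          Levenshtein.defaultCost_substitute, eq_self_iff_true, if_true] at h
        have h0 : levenshtein Levenshtein.defaultCost xs ys = 0 := by omega
        rw [ih ys h0]
      · exfalso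
        rw [levenshtein_cons_cons] at h
        simp only [Levenshtein.defaultCost_delete, Levenshtein.defaultCost_insert,
          Levenshtein.defaultCost_substitute, if_neg hab] at h
        omega

lemma lev_le_one {α : Type*} [DecidableEq α] :
    ∀ (l₁ l₂ : List α) (h : l₁.length = l₂.length),
      levenshtein Levenshtein.defaultCost l₁ l₂ ≤ 1 →
      ∃ k : ℕ, ∀ i (hi : i < l₁.length), i ≠ k → l₁[i] = l₂[i]'(h ▸ hi) := by
  intro l₁
  induction l₁ with
  | nil =>
    intro l₂ h _
    exact ⟨0, fun i hi _ => absurd hi (by simp)⟩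
  | cons a xs ih =>
    intro l₂ h hle
    cases l₂ with
    | nil => simp at h
    | cons b ys =>
      have hlen : xs.length = ys.length := by simpa using h
      by_cases hab : a = b
      · subst hab
        rw [levenshtein_cons_cons] at hle
        simp only [Levenshtein.defaultCost_delete, Levenshtein.defaultCost_insert,
          Levenshtein.defaultCost_substitute, eq_self_iff_true, if_true] at hle
        have h0 : levenshtein Levenshtein.defaultCost xs (a :: ys) = 0 ∨
            levenshtein Levenshtein.defaultCost (a :: xs) ys = 0 ∨
            levenshtein Levenshtein.defaultCost xs ys ≤ 1 := by omega
        have hs : levenshtein Levenshtein.defaultCost xs ys ≤ 1 := by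
          rcases h0 with h0 | h0 | h0
          · have hx := lev_eq_zero _ _ h0
            have : xs.length = ys.length + 1 := by rw [hx]; simp
            omega
          · have hx := lev_eq_zero _ _ h0
            have : xs.length + 1 = ys.length := by rw [← hx]; simp
            omega
          · exact h0
        obtain ⟨k, hk⟩ := ih ys hlen hs
        refine ⟨k + 1, fun i hi hik => ?_⟩
        match i with
        | 0 => simp
        | (m+1) =>
          simp only [List.getElem_cons_succ]
          exact hk m (by simpa using hi) (by omega)
      · rw [levenshtein_cons_cons] at hle
        simp only [Levenshtein.defaultCost_delete, Levenshtein.defaultCost_insert,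
          Levenshtein.defaultCost_substitute, if_neg hab] at hle
        have h0 : levenshtein Levenshtein.defaultCost xs (b :: ys) = 0 ∨
            levenshtein Levenshtein.defaultCost (a :: xs) ys = 0 ∨
            levenshtein Levenshtein.defaultCost xs ys = 0 := by omega
        rcases h0 with h0 | h0 | h0
        · have := lev_eq_zero _ _ h0
          have : xs.length = ys.length + 1 := by rw [this]; simp
          omega
        · have := lev_eq_zero _ _ h0
          have : xs.length + 1 = ys.length := by rw [← this]; simp
          omega
        · have hxy : xs = ys := lev_eq_zero _ _ h0
          refine ⟨0, fun i hi hik => ?_⟩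
          match i with
          | 0 => exact absurd rfl hik
          | (m+1) =>
            simp only [List.getElem_cons_succ]
            subst hxy
            rfl

lemma diff_single {α : Type*} [DecidableEq α] {n : ℕ} (s t : Fin n → α)
    (h : editDist s t ≤ 1) : ∃ k : ℕ, ∀ j : Fin n, (j : ℕ) ≠ k → s j = t j := by
  obtain ⟨k, hk⟩ := lev_le_one (List.ofFn s) (List.ofFn t) (by simp) h
  refine ⟨k, fun j hj => ?_⟩
  have := hk j (by simpa using j.2) hj
  simpa using this

lemma two_diffs {α : Type*} [DecidableEq α] {n : ℕ} (s t : Fin n → α) (i j : Fin n)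
    (hij : i ≠ j) (h1 : s i ≠ t i) (h2 : s j ≠ t j) : 2 ≤ editDist s t := by
  by_contra h
  push_neg at h
  obtain ⟨k, hk⟩ := diff_single s t (by omega)
  rcases eq_or_ne (i : ℕ) k with hik | hik
  · exact h2 (hk j (fun e => hij (Fin.ext (hik.trans e.symm))))
  · exact h1 (hk i hik)

theorem stmt5 {α B : Type*} [Fintype α] [DecidableEq α] (hα : 1 < Fintype.card α)
    {n : ℕ} (hn : 0 < n) (f : (Fin n → α) → Set B) (hf : IsSensitive 1 2 f)
    (s : Fin n → α) (b : B) (hb : b ∈ f s) :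
    (∃ i : Fin n, ∀ t : Fin n → α, b ∈ f t → ∀ j : Fin n, j ≠ i → t j = s j) ∧
    Set.ncard {t : Fin n → α | b ∈ f t} ≤ Fintype.card α := by
  -- every bucket member differs from s at at most one position
  have hmem : ∀ t : Fin n → α, b ∈ f t → ∃ k : Fin n, ∀ j : Fin n, j ≠ k → t j = s j := by
    intro t ht
    have hle : editDist s t ≤ 1 := by
      by_contra hle
      have := hf.2 s t (by omega)
      have : b ∈ f s ∩ f t := ⟨hb, ht⟩
      simp_all
    obtain ⟨k, hk⟩ := diff_single s t hle
    by_cases hkn : k < n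
    · exact ⟨⟨k, hkn⟩, fun j hj => (hk j (fun e => hj (Fin.ext e))).symm⟩
    · exact ⟨⟨0, hn⟩, fun j _ => (hk j (by omega)).symm⟩
  have key : ∃ i : Fin n, ∀ t : Fin n → α, b ∈ f t → ∀ j : Fin n, j ≠ i → t j = s j := by
    by_cases hex : ∃ t₀ : Fin n → α, b ∈ f t₀ ∧ t₀ ≠ s
    · obtain ⟨t₀, ht₀, ht₀s⟩ := hex
      obtain ⟨k₀, hk₀⟩ := hmem t₀ ht₀
      have hne : t₀ k₀ ≠ s k₀ := by
        intro he
        exact ht₀s (funext fun j => by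
          by_cases hj : j = k₀
          · rw [hj]; exact he
          · exact hk₀ j hj)
      refine ⟨k₀, fun t ht j hj => ?_⟩
      obtain ⟨k, hk⟩ := hmem t ht
      by_cases hjk : j = k
      · -- suppose t j ≠ s j; then t, t₀ differ at both j and k₀
        by_contra htj
        have h1 : t j ≠ t₀ j := by rw [hk₀ j hj]; exact htj
        have h2 : t k₀ ≠ t₀ k₀ := by
          rw [hk k₀ (fun e => hj (hjk.trans e.symm))]
          exact fun e => hne e.symm
        have h2' : 2 ≤ editDist t t₀ := two_diffs t t₀ j k₀ hj h1 h2
        have := hf.2 t t₀ h2'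
        have : b ∈ f t ∩ f t₀ := ⟨ht, ht₀⟩
        simp_all
      · exact hk j hjk
    · push_neg at hex
      refine ⟨⟨0, hn⟩, fun t ht j _ => ?_⟩
      rw [hex t ht]
  obtain ⟨i, hi⟩ := key
  refine ⟨⟨i, hi⟩, ?_⟩
  set S : Set (Fin n → α) := {t | ∀ j : Fin n, j ≠ i → t j = s j} with hS
  have hsub : {t : Fin n → α | b ∈ f t} ⊆ S := fun t ht => hi t ht
  have hinj : Function.Injective (fun t : S => (t : Fin n → α) i) := by
    rintro ⟨t₁, h₁⟩ ⟨t₂, h₂⟩ he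
    ext j
    simp only at he ⊢
    by_cases hj : j = i
    · rw [hj]; exact he
    · rw [h₁ j hj, h₂ j hj]
  calc Set.ncard {t : Fin n → α | b ∈ f t} ≤ Set.ncard S := Set.ncard_le_ncard hsub S.toFinite
    _ = Nat.card S := rfl
    _ ≤ Nat.card α := Nat.card_le_card_of_injective _ hinj
    _ = Fintype.card α := Nat.card_eq_fintype_card
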